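/- Let γ be a piecewise C¹ curve in ℂ \ supp μ from z₀ to z₁, where μ is a finite compactly supported Borel measure. Then p_μ(z₁) = p_μ(z₀) + Re(∫_γ p_μ'(ζ) dζ), where p_μ' is the Cauchy transform of μ. -/

import Mathlib

open MeasureTheory

/-- The (topological) support of a measure: points all of whose neighbourhoods
have positive measure. -/
def msupport (μ : Measure ℂ) : Set ℂ := {x : ℂ | ∀ V ∈ nhds x, μ V ≠ 0}

lemma logabs_deriv {f : ℝ → ℂ} {f' : ℂ} {t : ℝ} (hf : HasDerivAt f f' t)
    (hne : f t ≠ 0) :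
    HasDerivAt (fun s => Real.log (‖f s‖)) (((f t)⁻¹ * f').re) t := by
  have hre : HasDerivAt (fun s => (f s).re) f'.re t := by
    exact Complex.reCLM.hasFDerivAt.comp_hasDerivAt t hf
  have him : HasDerivAt (fun s => (f s).im) f'.im t := by
    exact Complex.imCLM.hasFDerivAt.comp_hasDerivAt t hf
  have hns : HasDerivAt (fun s => Complex.normSq (f s))
      (f'.re * (f t).re + (f t).re * f'.re + (f'.im * (f t).im + (f t).im * f'.im)) t := by
    have := (hre.mul hre).add (him.mul him); simp only [Complex.normSq_apply]; exact this
  have hns0 : Complex.normSq (f t) ≠ 0 := by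
    simpa [Complex.normSq_eq_zero] using hne
  have hlog := ((Real.hasDerivAt_log hns0).comp t hns).div_const 2
  have hfun : (fun s => Real.log (‖f s‖)) =
      fun s => Real.log (Complex.normSq (f s)) / 2 := by
    funext s
    rw [Complex.norm_def, Real.log_sqrt (Complex.normSq_nonneg _)]
  rw [hfun]
  convert hlog using 1
  case e'_4 => rfl
  case e'_5 => rfl
  case e'_8 => rfl
  simp only [Complex.mul_re, Complex.inv_re, Complex.inv_im, Complex.normSq_apply]
  have : (f t).re * (f t).re + (f t).im * (f t).im ≠ 0 := by
    simpa [Complex.normSq_apply] using hns0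
  field_simp
  ring

theorem stmt12 (μ : Measure ℂ) [IsFiniteMeasure μ] (hS : IsCompact (msupport μ))
    (γ γ' : ℝ → ℂ) (z₀ z₁ : ℂ) (h0 : γ 0 = z₀) (h1 : γ 1 = z₁)
    (hγ : ∀ t ∈ Set.Icc (0 : ℝ) 1, HasDerivAt γ (γ' t) t)
    (hγ' : ContinuousOn γ' (Set.Icc (0 : ℝ) 1))
    (havoid : ∀ t ∈ Set.Icc (0 : ℝ) 1, γ t ∉ msupport μ) :
    (∫ w, Real.log (‖z₁ - w‖) ∂μ) =
      (∫ w, Real.log (‖z₀ - w‖) ∂μ) +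
        (∫ t in (0 : ℝ)..1, (∫ w, (γ t - w)⁻¹ ∂μ) * γ' t).re := by
  set S := msupport μ with hSdef
  -- S is closed
  have hSclosed : IsClosed S := by
    rw [← isOpen_compl_iff, isOpen_iff_mem_nhds]
    intro x hx
    simp only [hSdef, msupport, Set.mem_compl_iff, Set.mem_setOf_eq, not_forall] at hx
    push_neg at hx
    obtain ⟨V, hV, hV0⟩ := hx
    have hint : interior V ∈ nhds x := by
      exact interior_mem_nhds.2 hV
    refine Filter.mem_of_superset hint ?_
    intro y hy
    simp only [hSdef, msupport, Set.mem_compl_iff, Set.mem_setOf_eq, not_forall]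
    push_neg
    refine ⟨interior V, isOpen_interior.mem_nhds hy, le_antisymm ?_ bot_le⟩
    exact le_trans (measure_mono interior_subset) (le_of_eq hV0)
  -- a.e. point is in S
  have haeS : ∀ᵐ w ∂μ, w ∈ S := by
    have hnull : μ Sᶜ = 0 := by
      refine measure_null_of_locally_null _ (fun x hx => ?_)
      simp only [hSdef, msupport, Set.mem_compl_iff, Set.mem_setOf_eq, not_forall] at hx
      push_neg at hx
      obtain ⟨V, hV, hV0⟩ := hx
      exact ⟨V, nhdsWithin_le_nhds hV, hV0⟩
    rw [Filter.eventually_iff, mem_ae_iff]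
    simpa using hnull
  -- γ is continuous on [0,1]
  have hγc : ContinuousOn γ (Set.Icc 0 1) :=
    fun t ht => (hγ t ht).continuousAt.continuousWithinAt
  set K : Set ℂ := γ '' Set.Icc 0 1 with hKdef
  have hK : IsCompact K := isCompact_Icc.image_of_continuousOn hγc
  have hKsub : K ⊆ Sᶜ := by
    rintro - ⟨t, ht, rfl⟩; exact havoid t ht
  obtain ⟨δ, δpos, hδ⟩ := hK.exists_thickening_subset_open hSclosed.isOpen_compl hKsub
  -- distance bound below
  have hdist : ∀ t ∈ Set.Icc (0:ℝ) 1, ∀ w ∈ S, δ ≤ ‖γ t - w‖ := by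
    intro t ht w hw
    by_contra h
    push_neg at h
    have : w ∈ Metric.thickening δ K := by
      rw [Metric.mem_thickening_iff]
      exact ⟨γ t, ⟨t, ht, rfl⟩, by rwa [dist_comm, Complex.dist_eq]⟩
    exact (hδ this) hw
  have hne : ∀ t ∈ Set.Icc (0:ℝ) 1, ∀ w ∈ S, γ t - w ≠ 0 := by
    intro t ht w hw h
    have := hdist t ht w hw
    rw [h] at this; simp at this; linarith
  -- upper bound on |γ t - w|
  obtain ⟨r, hr⟩ := (hK.union hS).isBounded.subset_closedBall 0
  set C : ℝ := 2 * |r| + 1 with hCdef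
  have hC1 : (0:ℝ) < C := by positivity
  have habs_le : ∀ t ∈ Set.Icc (0:ℝ) 1, ∀ w ∈ S, ‖γ t - w‖ ≤ C := by
    intro t ht w hw
    have h1 : ‖γ t‖ ≤ r := by
      simpa using hr (Set.mem_union_left _ ⟨t, ht, rfl⟩)
    have h2 : ‖w‖ ≤ r := by
      simpa using hr (Set.mem_union_right _ hw)
    calc ‖γ t - w‖ ≤ ‖γ t‖ + ‖w‖ := by
          simpa using norm_sub_le (γ t) w
      _ ≤ r + r := add_le_add h1 h2
      _ ≤ C := by rw [hCdef]; have := abs_nonneg r; have := le_abs_self r; linarith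
  -- log bound
  set B : ℝ := max |Real.log δ| |Real.log C| with hBdef
  have hlogB : ∀ x : ℝ, δ ≤ x → x ≤ C → |Real.log x| ≤ B := by
    intro x h1 h2
    rw [abs_le]
    constructor
    · have : Real.log δ ≤ Real.log x := Real.log_le_log δpos h1
      have h3 : -|Real.log δ| ≤ Real.log δ := neg_abs_le _
      have h4 : |Real.log δ| ≤ B := le_max_left _ _
      linarith
    · have : Real.log x ≤ Real.log C := Real.log_le_log (lt_of_lt_of_le δpos h1) h2
      have h3 : Real.log C ≤ |Real.log C| := le_abs_self _
      have h4 : |Real.log C| ≤ B := le_max_right _ _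
      linarith
  -- bound on γ'
  obtain ⟨M, hM⟩ := isCompact_Icc.exists_bound_of_continuousOn hγ'
  -- measurability
  have hmeas_log : ∀ t : ℝ, AEStronglyMeasurable (fun w => Real.log (‖γ t - w‖)) μ :=
    fun t => (Real.measurable_log.comp (continuous_norm.measurable.comp
      (measurable_const.sub measurable_id))).aestronglyMeasurable
  have hInt_log : ∀ t ∈ Set.Icc (0:ℝ) 1,
      Integrable (fun w => Real.log (‖γ t - w‖)) μ := by
    intro t ht
    refine Integrable.mono' (integrable_const B) (hmeas_log t) ?_
    filter_upwards [haeS] with w hw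
    simpa [Real.norm_eq_abs] using hlogB _ (hdist t ht w hw) (habs_le t ht w hw)
  have hmeas_inv : ∀ t : ℝ, AEStronglyMeasurable (fun w => (γ t - w)⁻¹) μ :=
    fun t => ((measurable_const.sub measurable_id).inv).aestronglyMeasurable
  have hinvle : ∀ t ∈ Set.Icc (0:ℝ) 1, ∀ w ∈ S, ‖(γ t - w)⁻¹‖ ≤ δ⁻¹ := by
    intro t ht w hw
    rw [norm_inv]
    exact inv_anti₀ δpos (hdist t ht w hw)
  have hInt_inv : ∀ t ∈ Set.Icc (0:ℝ) 1, Integrable (fun w => (γ t - w)⁻¹) μ := by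
    intro t ht
    refine Integrable.mono' (integrable_const δ⁻¹) (hmeas_inv t) ?_
    filter_upwards [haeS] with w hw
    exact hinvle t ht w hw
  -- continuity of the potential
  have hFcont : ContinuousOn (fun t => ∫ w, Real.log (‖γ t - w‖) ∂μ)
      (Set.Icc 0 1) := by
    refine continuousOn_of_dominated (fun t _ => hmeas_log t) (fun t ht => ?_)
      (integrable_const B) ?_
    · filter_upwards [haeS] with w hw
      simpa [Real.norm_eq_abs] using hlogB _ (hdist t ht w hw) (habs_le t ht w hw)
    · filter_upwards [haeS] with w hw
      intro t ht
      have h1 : ContinuousWithinAt (fun s => γ s - w) (Set.Icc 0 1) t :=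
        (hγc t ht).sub continuousWithinAt_const
      have h2 : ContinuousWithinAt (fun s => ‖γ s - w‖) (Set.Icc 0 1) t :=
        continuous_norm.continuousAt.comp_continuousWithinAt h1
      have hne' : ‖γ t - w‖ ≠ 0 :=
        ne_of_gt (lt_of_lt_of_le δpos (hdist t ht w hw))
      exact h2.log hne'
  -- continuity of the Cauchy transform
  have hGcont : ContinuousOn (fun t => ∫ w, (γ t - w)⁻¹ ∂μ) (Set.Icc 0 1) := by
    refine continuousOn_of_dominated (fun t _ => hmeas_inv t) (fun t ht => ?_)
      (integrable_const δ⁻¹) ?_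
    · filter_upwards [haeS] with w hw
      exact hinvle t ht w hw
    · filter_upwards [haeS] with w hw
      intro t ht
      have h1 : ContinuousWithinAt (fun s => γ s - w) (Set.Icc 0 1) t :=
        (hγc t ht).sub continuousWithinAt_const
      exact h1.inv₀ (hne t ht w hw)
  have hgcont : ContinuousOn (fun t => ((∫ w, (γ t - w)⁻¹ ∂μ) * γ' t).re) (Set.Icc 0 1) :=
    Complex.continuous_re.comp_continuousOn (hGcont.mul hγ')
  -- derivative at interior points
  have hderiv : ∀ t ∈ Set.Ioo (0:ℝ) 1,
      HasDerivAt (fun x => ∫ w, Real.log (‖γ x - w‖) ∂μ)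
        (((∫ w, (γ t - w)⁻¹ ∂μ) * γ' t).re) t := by
    intro t ht
    have εpos : (0:ℝ) < min t (1 - t) := lt_min ht.1 (by linarith [ht.2])
    have hball : Metric.ball t (min t (1 - t)) ⊆ Set.Icc (0:ℝ) 1 := by
      intro x hx
      rw [Metric.mem_ball, Real.dist_eq, abs_lt] at hx
      have h1 := min_le_left t (1 - t)
      have h2 := min_le_right t (1 - t)
      constructor <;> [linarith [hx.1]; linarith [hx.2]]
    have key := hasDerivAt_integral_of_dominated_loc_of_deriv_le (μ := μ)
      (F := fun x w => Real.log (‖γ x - w‖))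
      (F' := fun x w => ((γ x - w)⁻¹ * γ' x).re)
      (bound := fun _ => δ⁻¹ * M) (Metric.ball_mem_nhds t εpos)
      (Filter.Eventually.of_forall (fun x => hmeas_log x))
      (hInt_log t (hball (Metric.mem_ball_self εpos)))
      ((Complex.measurable_re.comp (((measurable_const.sub measurable_id).inv).mul
        measurable_const)).aestronglyMeasurable)
      ?_ (integrable_const _) ?_
    · have heq : (∫ w, ((γ t - w)⁻¹ * γ' t).re ∂μ)
          = ((∫ w, (γ t - w)⁻¹ ∂μ) * γ' t).re := by
        have h2 := Complex.reCLM.integral_comp_comm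
          ((hInt_inv t (hball (Metric.mem_ball_self εpos))).mul_const (γ' t))
        simp only [Complex.reCLM_apply] at h2
        rw [h2, integral_mul_const]
      rw [← heq]
      exact key.2
    · filter_upwards [haeS] with w hw
      intro x hx
      have hx' := hball hx
      calc ‖((γ x - w)⁻¹ * γ' x).re‖ ≤ ‖(γ x - w)⁻¹ * γ' x‖ := by
            simpa [Real.norm_eq_abs] using Complex.abs_re_le_norm ((γ x - w)⁻¹ * γ' x)
        _ = (‖γ x - w‖)⁻¹ * ‖γ' x‖ := by
            rw [norm_mul, norm_inv]
        _ ≤ δ⁻¹ * M := by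
            refine mul_le_mul ?_ ?_ (norm_nonneg _) (inv_nonneg.2 δpos.le)
            · exact inv_anti₀ δpos (hdist x hx' w hw)
            · simpa using hM x hx'
    · filter_upwards [haeS] with w hw
      intro x hx
      have hx' := hball hx
      exact logabs_deriv ((hγ x hx').sub_const w) (hne x hx' w hw)
  -- FTC
  have hFTC := intervalIntegral.integral_eq_sub_of_hasDeriv_right_of_le zero_le_one hFcont
    (fun x hx => (hderiv x hx).hasDerivWithinAt)
    (ContinuousOn.intervalIntegrable (by rw [Set.uIcc_of_le zero_le_one]; exact hgcont))
  have hre : (∫ t in (0:ℝ)..1, (∫ w, (γ t - w)⁻¹ ∂μ) * γ' t).re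
      = ∫ t in (0:ℝ)..1, ((∫ w, (γ t - w)⁻¹ ∂μ) * γ' t).re := by
    have hint : IntervalIntegrable (fun t => (∫ w, (γ t - w)⁻¹ ∂μ) * γ' t) volume 0 1 :=
      ContinuousOn.intervalIntegrable (by rw [Set.uIcc_of_le zero_le_one]; exact hGcont.mul hγ')
    simpa using (Complex.reCLM.intervalIntegral_comp_comm hint).symm
  rw [← h0, ← h1, hre, hFTC]
  ring
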